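/- For the d-dimensional Morton index m on [0,2^L)^d, if cube Q' of level l+1 is a child of cube Q of level l (i.e., each anchor coordinate of Q' equals that of Q or that of Q plus 2^{L−(l+1)}), then m(anchor(Q)) ≤ m(anchor(Q')) < m(anchor(Q)) + 2^{d(L−l)}. -/

import Mathlib

def morton (d L : ℕ) (p : Fin d → ℕ) : ℕ :=
  ∑ j ∈ Finset.range L, ∑ i : Fin d, ((p i).testBit j).toNat * 2 ^ (d * j + (i : ℕ))

lemma bit_formula (k q c j : ℕ) (hc : c ≤ 1) :
    ((2^(k+1)*q + c*2^k).testBit j).toNat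
      = ((2^(k+1)*q).testBit j).toNat + (if j = k then c else 0) := by
  interval_cases c
  · simp
  · have h1 : 2^(k+1)*q + 1*2^k = (2*q+1) * 2^k := by ring
    have h2 : 2^(k+1)*q = q * 2^(k+1) := by ring
    rw [h1, h2, ← Nat.shiftLeft_eq, ← Nat.shiftLeft_eq, Nat.testBit_shiftLeft,
      Nat.testBit_shiftLeft]
    rcases lt_trichotomy j k with h|h|h
    · have hk1 : ¬ (k + 1 ≤ j) := by omega
      simp [Nat.not_le.2 h, h.ne, hk1]
    · have hk1 : ¬ (k + 1 ≤ j) := by omega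
      have hm : (2*q+1) % 2 = 1 := by omega
      simp [h, Nat.testBit_zero, hk1, hm]
    · have hjk : j - k = (j - (k+1)) + 1 := by omega
      have hq : (2*q+1)/2 = q := by omega
      simp [Nat.le_of_lt h, show k+1 ≤ j by omega, hjk, Nat.testBit_add_one, hq, h.ne']

lemma sum_two_pow_lt (n : ℕ) : ∑ i ∈ Finset.range n, 2^i < 2^n := by
  induction n with
  | zero => simp
  | succ n ih => rw [Finset.sum_range_succ, pow_succ]; omega

theorem morton_child_range (d L l : ℕ) (hd : 1 ≤ d) (hl : l + 1 ≤ L)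
    (a a' : Fin d → ℕ)
    (ha : ∀ i, a i < 2 ^ L ∧ 2 ^ (L - l) ∣ a i)
    (hchild : ∀ i, a' i = a i ∨ a' i = a i + 2 ^ (L - (l + 1))) :
    morton d L a ≤ morton d L a' ∧
      morton d L a' < morton d L a + 2 ^ (d * (L - l)) := by
  set k := L - (l + 1) with hk
  have hkL : k < L := by omega
  have hLl : L - l = k + 1 := by omega
  -- choose e i ∈ {0,1}
  set e : Fin d → ℕ := fun i => if a' i = a i then 0 else 1 with he
  have he1 : ∀ i, e i ≤ 1 := by intro i; simp only [he]; split <;> omega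
  have ha' : ∀ i, a' i = a i + e i * 2^k := by
    intro i
    simp only [he]
    rcases hchild i with h | h
    · simp [h]
    · rw [h]
      have hp : 0 < 2 ^ (L - (l+1)) := Nat.pow_pos (by norm_num)
      have : a i + 2 ^ (L - (l+1)) ≠ a i := by omega
      simp [this]
  have hbit : ∀ i j, ((a' i).testBit j).toNat
      = ((a i).testBit j).toNat + (if j = k then e i else 0) := by
    intro i j
    obtain ⟨q, hq⟩ := (ha i).2
    rw [hLl] at hq
    rw [ha' i, hq]
    exact bit_formula k q (e i) j (he1 i)
  have key : morton d L a' = morton d L a + ∑ i : Fin d, e i * 2^(d*k + (i:ℕ)) := by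
    unfold morton
    have : ∀ j ∈ Finset.range L, ∑ i : Fin d, ((a' i).testBit j).toNat * 2 ^ (d * j + (i:ℕ))
        = ∑ i : Fin d, (((a i).testBit j).toNat * 2 ^ (d * j + (i:ℕ))
            + (if j = k then e i * 2 ^ (d * j + (i:ℕ)) else 0)) := by
      intro j _
      refine Finset.sum_congr rfl fun i _ => ?_
      rw [hbit i j, add_mul]
      congr 1
      split <;> simp
    rw [Finset.sum_congr rfl this]
    simp only [Finset.sum_add_distrib]
    congr 1
    rw [Finset.sum_comm]
    refine Finset.sum_congr rfl fun i _ => ?_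
    rw [Finset.sum_ite_eq' (Finset.range L) k]
    simp [Finset.mem_range.2 hkL]
  constructor
  · rw [key]; exact Nat.le_add_right _ _
  · rw [key, hLl]
    have h1 : ∑ i : Fin d, e i * 2^(d*k + (i:ℕ)) ≤ ∑ i : Fin d, 2^(d*k + (i:ℕ)) := by
      refine Finset.sum_le_sum fun i _ => ?_
      calc e i * 2^(d*k + (i:ℕ)) ≤ 1 * 2^(d*k + (i:ℕ)) :=
            Nat.mul_le_mul_right _ (he1 i)
        _ = 2^(d*k + (i:ℕ)) := one_mul _
    have h2 : ∑ i : Fin d, 2^(d*k + (i:ℕ)) < 2^(d*(k+1)) := by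
      have : ∑ i : Fin d, 2^(d*k + (i:ℕ)) = 2^(d*k) * ∑ i ∈ Finset.range d, 2^i := by
        rw [Finset.mul_sum, Fin.sum_univ_eq_sum_range (fun i => 2^(d*k + i))]
        exact Finset.sum_congr rfl fun i _ => pow_add 2 _ _
      rw [this, Nat.mul_succ, pow_add]
      have hp : 0 < 2 ^ (d*k) := Nat.pow_pos (by norm_num)
      exact mul_lt_mul_of_pos_left (sum_two_pow_lt d) hp
    omega
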